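/- Mullen's conjecture is false: the polynomial f(x) = x^6 + a x^5 - a^4 x^2 over F_27, for any nonzero a ∈ F_27, is a permutation polynomial of F_27, even though n = 6 is even, q = 27 is odd, and 27 > 6·(6-2) = 24; in particular |V_f| = 27 > 22 = q - ⌈(q-1)/n⌉. -/

import Mathlib

open Polynomial Finset

instance : Fact (Nat.Prime 3) := ⟨by norm_num⟩

noncomputable instance : Fintype (GaloisField 3 3) := Fintype.ofFinite _

noncomputable instance : DecidableEq (GaloisField 3 3) := Classical.decEq _

/-- Concrete model of `𝔽₂₇ = 𝔽₃[x]/(x³ - x - 1)`, as coefficient triples. -/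
def F27 := ZMod 3 × ZMod 3 × ZMod 3

namespace F27
instance : DecidableEq F27 := inferInstanceAs (DecidableEq (ZMod 3 × ZMod 3 × ZMod 3))
instance : Fintype F27 := inferInstanceAs (Fintype (ZMod 3 × ZMod 3 × ZMod 3))

def add (x y : F27) : F27 := (x.1+y.1, x.2.1+y.2.1, x.2.2+y.2.2)
def neg (x : F27) : F27 := (-x.1, -x.2.1, -x.2.2)
def mul (x y : F27) : F27 :=
  (x.1*y.1 + (x.2.1*y.2.2 + x.2.2*y.2.1),
   x.1*y.2.1 + x.2.1*y.1 + (x.2.1*y.2.2 + x.2.2*y.2.1) + x.2.2*y.2.2,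
   x.1*y.2.2 + x.2.1*y.2.1 + x.2.2*y.1 + x.2.2*y.2.2)

instance : Zero F27 := ⟨((0:ZMod 3),(0:ZMod 3),(0:ZMod 3))⟩
instance : One F27 := ⟨((1:ZMod 3),(0:ZMod 3),(0:ZMod 3))⟩
instance : Add F27 := ⟨add⟩
instance : Neg F27 := ⟨neg⟩
instance : Mul F27 := ⟨mul⟩

theorem zero_def : (0 : F27) = ((0:ZMod 3),(0:ZMod 3),(0:ZMod 3)) := rfl
theorem one_def : (1 : F27) = ((1:ZMod 3),(0:ZMod 3),(0:ZMod 3)) := rfl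
theorem add_def (x y : F27) : x + y = add x y := rfl
theorem neg_def (x : F27) : -x = neg x := rfl
theorem mul_def (x y : F27) : x * y = mul x y := rfl

instance : CommRing F27 where
  add_assoc x y z := by change (_ : ZMod 3 × ZMod 3 × ZMod 3) = _; simp only [add_def]; simp only [add, Prod.mk.injEq]; and_intros <;> ring
  zero_add x := by change (_ : ZMod 3 × ZMod 3 × ZMod 3) = _; simp only [add_def]; simp only [zero_def, add]; simp; rfl
  add_zero x := by change (_ : ZMod 3 × ZMod 3 × ZMod 3) = _; simp only [add_def]; simp only [zero_def, add]; simp; rfl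
  add_comm x y := by change (_ : ZMod 3 × ZMod 3 × ZMod 3) = _; simp only [add_def]; simp only [add, Prod.mk.injEq]; and_intros <;> ring
  neg_add_cancel x := by
    change (_ : ZMod 3 × ZMod 3 × ZMod 3) = _; simp only [add_def, neg_def]; simp only [zero_def, add, neg, Prod.mk.injEq]; and_intros <;> ring
  mul_assoc x y z := by change (_ : ZMod 3 × ZMod 3 × ZMod 3) = _; simp only [mul_def]; simp only [mul, Prod.mk.injEq]; and_intros <;> ring
  one_mul x := by change (_ : ZMod 3 × ZMod 3 × ZMod 3) = _; simp only [mul_def]; simp only [one_def, mul]; simp; rfl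
  mul_one x := by change (_ : ZMod 3 × ZMod 3 × ZMod 3) = _; simp only [mul_def]; simp only [one_def, mul]; simp; rfl
  left_distrib x y z := by
    change (_ : ZMod 3 × ZMod 3 × ZMod 3) = _; simp only [mul_def, add_def]; simp only [mul, add, Prod.mk.injEq]; and_intros <;> ring
  right_distrib x y z := by
    change (_ : ZMod 3 × ZMod 3 × ZMod 3) = _; simp only [mul_def, add_def]; simp only [mul, add, Prod.mk.injEq]; and_intros <;> ring
  mul_comm x y := by change (_ : ZMod 3 × ZMod 3 × ZMod 3) = _; simp only [mul_def]; simp only [mul, Prod.mk.injEq]; and_intros <;> ring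
  zero_mul x := by change (_ : ZMod 3 × ZMod 3 × ZMod 3) = _; simp only [mul_def]; simp only [zero_def, mul]; simp
  mul_zero x := by change (_ : ZMod 3 × ZMod 3 × ZMod 3) = _; simp only [mul_def]; simp only [zero_def, mul]; simp
  nsmul := nsmulRec
  zsmul := zsmulRec

instance : Nontrivial F27 := ⟨0, 1, by decide⟩

instance : NoZeroDivisors F27 :=
  ⟨fun {x y} h => by revert h; revert x y; decide⟩

instance : IsDomain F27 := NoZeroDivisors.to_isDomain _

noncomputable instance : Field F27 := Fintype.fieldOfDomain _

theorem card_F27 : Fintype.card F27 = 27 := by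
  show Fintype.card (ZMod 3 × ZMod 3 × ZMod 3) = 27
  simp

theorem gbij : Function.Bijective (fun y : F27 => y^6 + y^5 - y^2) := by
  have : (fun y : F27 => y^6 + y^5 - y^2)
      = fun y : F27 => y*y*y*y*y*y + y*y*y*y*y - y*y := by
    funext y; ring
  rw [this]
  decide

end F27

theorem card_GF : Fintype.card (GaloisField 3 3) = 27 := by
  have h := GaloisField.card 3 3 (by norm_num)
  exact Nat.card_eq_fintype_card.symm.trans (h.trans (by norm_num))

theorem gbij_GF : Function.Bijective (fun y : GaloisField 3 3 => y^6 + y^5 - y^2) := by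
  have e : GaloisField 3 3 ≃+* F27 :=
    FiniteField.ringEquivOfCardEq (by rw [card_GF, F27.card_F27])
  have key : (fun y : GaloisField 3 3 => y^6 + y^5 - y^2)
      = (e.symm ∘ (fun y : F27 => y^6 + y^5 - y^2) ∘ e) := by
    funext y
    simp [Function.comp, map_add, map_sub, map_pow]
  rw [key]
  exact e.symm.bijective.comp (F27.gbij.comp e.bijective)

theorem mullen_conjecture_false (a : GaloisField 3 3) (ha : a ≠ 0) :
    Function.Bijective
      (fun c : GaloisField 3 3 =>
        ((X ^ 6 + C a * X ^ 5 - C (a ^ 4) * X ^ 2 : (GaloisField 3 3)[X])).eval c) ∧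
    Even 6 ∧ Odd (Fintype.card (GaloisField 3 3)) ∧
    Fintype.card (GaloisField 3 3) = 27 ∧ 27 > 6 * (6 - 2) ∧
    (Finset.univ.image fun c : GaloisField 3 3 =>
        ((X ^ 6 + C a * X ^ 5 - C (a ^ 4) * X ^ 2 : (GaloisField 3 3)[X])).eval c).card
      = 27 ∧ (27 : ℕ) > 27 - 26 ⌈/⌉ 6 := by
  have hfa : (fun c : GaloisField 3 3 =>
        ((X ^ 6 + C a * X ^ 5 - C (a ^ 4) * X ^ 2 : (GaloisField 3 3)[X])).eval c)
      = (fun z : GaloisField 3 3 => a^6 * z)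
        ∘ (fun y : GaloisField 3 3 => y^6 + y^5 - y^2)
        ∘ (fun c : GaloisField 3 3 => a⁻¹ * c) := by
    funext c
    simp only [Function.comp, eval_sub, eval_add, eval_mul, eval_pow, eval_C, eval_X]
    field_simp
  have hbij : Function.Bijective
      (fun c : GaloisField 3 3 =>
        ((X ^ 6 + C a * X ^ 5 - C (a ^ 4) * X ^ 2 : (GaloisField 3 3)[X])).eval c) := by
    rw [hfa]
    exact ((Equiv.mulLeft₀ (a^6) (pow_ne_zero 6 ha)).bijective.comp gbij_GF).comp
      (Equiv.mulLeft₀ a⁻¹ (inv_ne_zero ha)).bijective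
  refine ⟨hbij, by decide, ?_, card_GF, by norm_num, ?_, by decide⟩
  · rw [card_GF]; decide
  · rw [Finset.image_univ_of_surjective hbij.2, Finset.card_univ, card_GF]
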